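/- Let (v*, q*) be an optimal solution of the value-learning primal LP. Then v* and q* satisfy the Bellman optimality equations: v*(s) = max_a Σ_{s'} τ(s'|s,a)(r(s,a,s') + γ v*(s')) for every state s, and q*(s,a) = Σ_{s'} τ(s'|s,a)(r(s,a,s') + γ max_{a'} q*(s',a')) for all s,a. Consequently v* and q* are the optimal value functions v^* and q^* of the MDP. -/

import Mathlib

open Finset

section MDPDefs

variable {S A : Type*}

/-- A (stationary, stochastic) policy on finite state/action spaces. -/
def IsPolicy [Fintype A] (π : S → A → ℝ) : Prop :=
  (∀ s a, 0 ≤ π s a) ∧ ∀ s, ∑ a, π s a = 1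

/-- `d` is the (discounted) state visitation density of the policy `π`:
it satisfies `d(s) = (1-γ)ι(s) + γ Σ_{s',a'} d(s') π(a'|s') τ(s|s',a')`. -/
def IsVisit [Fintype S] [Fintype A] (ι : S → ℝ) (τ : S → A → S → ℝ) (γ : ℝ)
    (π : S → A → ℝ) (d : S → ℝ) : Prop :=
  ∀ s, d s = (1 - γ) * ι s + γ * ∑ s', ∑ a', d s' * π s' a' * τ s' a' s

/-- Feasibility for the value-learning dual LP. -/
def DualFeas [Fintype S] [Fintype A] (ι : S → ℝ) (τ : S → A → S → ℝ) (γ : ℝ)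
    (d : S → ℝ) (p : S → A → ℝ) : Prop :=
  (∀ s, ∑ a, p s a = d s) ∧
  (∀ s, d s = (1 - γ) * ι s + γ * ∑ s', ∑ a', p s' a' * τ s' a' s) ∧
  ∀ s a, 0 ≤ p s a

/-- The dual objective: the average reward under the state-action density `p`,
`Σ_{s,a} p(s,a) Σ_{s'} τ(s'|s,a) r(s,a,s')`. -/
def DualObj [Fintype S] [Fintype A] (τ : S → A → S → ℝ) (r : S → A → S → ℝ)
    (p : S → A → ℝ) : ℝ :=
  ∑ s, ∑ a, p s a * ∑ s', τ s a s' * r s a s'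

/-- The standing MDP assumptions: `ι` is an everywhere-positive initial-state
distribution, `τ(·|s,a)` are transition probabilities and `γ ∈ [0,1)`. -/
def IsMDP [Fintype S] [Fintype A] (ι : S → ℝ) (τ : S → A → S → ℝ) (γ : ℝ) : Prop :=
  (∀ s, 0 < ι s) ∧ (∑ s, ι s = 1) ∧
  (∀ s a s', 0 ≤ τ s a s') ∧ (∀ s a, ∑ s', τ s a s' = 1) ∧
  0 ≤ γ ∧ γ < 1

end MDPDefs

lemma sup'_sub_sup'_le {ι : Type*} (s : Finset ι) (hs : s.Nonempty)
    (f g : ι → ℝ) : s.sup' hs f - s.sup' hs g ≤ s.sup' hs fun i => |f i - g i| := by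
  rw [sub_le_iff_le_add, Finset.sup'_le_iff]
  intro i hi
  have h1 : f i ≤ g i + |f i - g i| := by
    have := le_abs_self (f i - g i); linarith
  calc f i ≤ g i + |f i - g i| := h1
    _ ≤ (s.sup' hs fun i => |f i - g i|) + s.sup' hs g := by
      have h2 := le_sup' g hi
      have h3 := le_sup' (fun i => |f i - g i|) hi
      linarith

lemma abs_sup'_sub_sup'_le {ι : Type*} (s : Finset ι) (hs : s.Nonempty)
    (f g : ι → ℝ) : |s.sup' hs f - s.sup' hs g| ≤ s.sup' hs fun i => |f i - g i| := by
  rw [abs_sub_le_iff]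
  refine ⟨sup'_sub_sup'_le s hs f g, ?_⟩
  have := sup'_sub_sup'_le s hs g f
  simpa [abs_sub_comm] using this

/-- an optimal solution `(v*, q*)` of the value-learning primal LP satisfies
the Bellman optimality equations, and hence equals the optimal value functions of the MDP
(the unique solutions of the Bellman optimality equations). -/
theorem vl_primal_bellman_optimality
    {S A : Type*} [Fintype S] [Fintype A] [Nonempty S] [Nonempty A]
    (ι : S → ℝ) (τ : S → A → S → ℝ) (γ : ℝ) (r : S → A → S → ℝ)
    (hMDP : IsMDP ι τ γ)
    (vStar : S → ℝ) (qStar : S → A → ℝ)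
    (hFeas : (∀ s a, qStar s a ≤ vStar s) ∧
      (∀ s a, qStar s a = ∑ s', τ s a s' * (r s a s' + γ * vStar s')))
    (hOpt : ∀ (v : S → ℝ) (q : S → A → ℝ),
      ((∀ s a, q s a ≤ v s) ∧
        (∀ s a, q s a = ∑ s', τ s a s' * (r s a s' + γ * v s'))) →
      ∑ s, ι s * ((1 - γ) * vStar s) ≤ ∑ s, ι s * ((1 - γ) * v s)) :
    (∀ s, vStar s = ⨆ a, ∑ s', τ s a s' * (r s a s' + γ * vStar s')) ∧
    (∀ s a, qStar s a = ∑ s', τ s a s' * (r s a s' + γ * ⨆ a', qStar s' a')) ∧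
    (∀ v : S → ℝ,
      (∀ s, v s = ⨆ a, ∑ s', τ s a s' * (r s a s' + γ * v s')) → v = vStar) ∧
    (∀ q : S → A → ℝ,
      (∀ s a, q s a = ∑ s', τ s a s' * (r s a s' + γ * ⨆ a', q s' a')) → q = qStar) := by
  obtain ⟨hι, hιsum, hτ0, hτ1, hγ0, hγ1⟩ := hMDP
  obtain ⟨hle, heq⟩ := hFeas
  have hA : (Finset.univ : Finset A).Nonempty := univ_nonempty
  have hS : (Finset.univ : Finset S).Nonempty := univ_nonempty
  set T : (S → ℝ) → S → ℝ :=
    fun v s => univ.sup' hA fun a => ∑ s', τ s a s' * (r s a s' + γ * v s') with hTdef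
  have hsup_eq : ∀ (v : S → ℝ) (s : S),
      T v s = ⨆ a, ∑ s', τ s a s' * (r s a s' + γ * v s') := fun v s =>
    Finset.sup'_univ_eq_ciSup _
  have hsum_mono : ∀ (v w : S → ℝ), (∀ s, v s ≤ w s) → ∀ s a,
      ∑ s', τ s a s' * (r s a s' + γ * v s') ≤ ∑ s', τ s a s' * (r s a s' + γ * w s') := by
    intro v w h s a
    refine Finset.sum_le_sum fun s' _ => ?_
    nlinarith [mul_nonneg (hτ0 s a s') (mul_nonneg hγ0 (sub_nonneg.mpr (h s')))]
  have hTle : ∀ s, T vStar s ≤ vStar s := by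
    intro s
    refine Finset.sup'_le _ _ fun a _ => ?_
    rw [← heq s a]; exact hle s a
  have hfeas' : (∀ s a, (∑ s', τ s a s' * (r s a s' + γ * T vStar s')) ≤ T vStar s) ∧
      (∀ s a, (∑ s', τ s a s' * (r s a s' + γ * T vStar s')) =
        ∑ s', τ s a s' * (r s a s' + γ * T vStar s')) := by
    refine ⟨fun s a => ?_, fun s a => rfl⟩
    calc (∑ s', τ s a s' * (r s a s' + γ * T vStar s'))
        ≤ ∑ s', τ s a s' * (r s a s' + γ * vStar s') := hsum_mono _ _ hTle s a
      _ ≤ T vStar s := le_sup' (fun a => ∑ s', τ s a s' * (r s a s' + γ * vStar s')) (mem_univ a)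
  have hopt := hOpt (T vStar) _ hfeas'
  have hfix : ∀ s, vStar s = T vStar s := by
    by_contra hcon
    push_neg at hcon
    obtain ⟨s₀, hs₀⟩ := hcon
    have hlt : T vStar s₀ < vStar s₀ := lt_of_le_of_ne (hTle s₀) (fun h => hs₀ h.symm)
    have hstrict : ∑ s, ι s * ((1 - γ) * T vStar s) < ∑ s, ι s * ((1 - γ) * vStar s) := by
      refine Finset.sum_lt_sum (fun s _ => ?_) ⟨s₀, mem_univ s₀, ?_⟩
      · have h1 := hTle s
        have h2 := (hι s).le
        have h3 : (0:ℝ) ≤ 1 - γ := by linarith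
        nlinarith [mul_nonneg (mul_nonneg h2 h3) (sub_nonneg.mpr h1)]
      · have h2 := hι s₀
        have h3 : (0:ℝ) < 1 - γ := by linarith
        nlinarith [mul_pos (mul_pos h2 h3) (sub_pos.mpr hlt)]
    linarith
  have huniq : ∀ v w : S → ℝ, (∀ s, v s = T v s) → (∀ s, w s = T w s) → v = w := by
    intro v w hv hw
    set M : ℝ := univ.sup' hS fun s => |v s - w s| with hM
    have hMle : ∀ s, |v s - w s| ≤ M := fun s => le_sup' (fun s => |v s - w s|) (mem_univ s)
    have hkey : ∀ s, |v s - w s| ≤ γ * M := by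
      intro s
      rw [hv s, hw s]
      refine le_trans (abs_sup'_sub_sup'_le _ hA _ _) (Finset.sup'_le _ _ fun a _ => ?_)
      have hdiff : (∑ s', τ s a s' * (r s a s' + γ * v s')) -
          (∑ s', τ s a s' * (r s a s' + γ * w s')) =
          ∑ s', τ s a s' * (γ * (v s' - w s')) := by
        rw [← Finset.sum_sub_distrib]
        refine Finset.sum_congr rfl fun s' _ => by ring
      rw [hdiff]
      calc |∑ s', τ s a s' * (γ * (v s' - w s'))|
          ≤ ∑ s', |τ s a s' * (γ * (v s' - w s'))| := Finset.abs_sum_le_sum_abs _ _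
        _ ≤ ∑ s', τ s a s' * (γ * M) := by
            refine Finset.sum_le_sum fun s' _ => ?_
            rw [abs_mul, abs_of_nonneg (hτ0 s a s'), abs_mul, abs_of_nonneg hγ0]
            have h3 := hτ0 s a s'
            nlinarith [mul_nonneg h3 (mul_nonneg hγ0 (sub_nonneg.mpr (hMle s')))]
        _ = γ * M := by rw [← Finset.sum_mul, hτ1 s a, one_mul]
    have hM0 : 0 ≤ M := le_trans (abs_nonneg _) (hMle (Classical.arbitrary S))
    have hMγ : M ≤ γ * M := Finset.sup'_le _ _ fun s _ => hkey s
    have hMz : M ≤ 0 := by nlinarith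
    funext s
    have := hMle s
    have habs : |v s - w s| = 0 := le_antisymm (by linarith) (abs_nonneg _)
    have := abs_eq_zero.mp habs
    linarith
  have hfix' : ∀ s, vStar s = ⨆ a, ∑ s', τ s a s' * (r s a s' + γ * vStar s') := by
    intro s; rw [hfix s, hsup_eq]
  refine ⟨hfix', ?_, ?_, ?_⟩
  · intro s a
    have hqsup : ∀ s', (⨆ a', qStar s' a') = vStar s' := by
      intro s'
      rw [← Finset.sup'_univ_eq_ciSup (f := fun a' => qStar s' a')]
      rw [hfix s']
      exact congrArg _ (funext fun a' => heq s' a')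
    rw [heq s a]
    exact Finset.sum_congr rfl fun s' _ => by rw [hqsup s']
  · intro v hv
    exact huniq v vStar (fun s => by rw [hv s, hsup_eq]) hfix
  · intro q hq
    set w : S → ℝ := fun s => ⨆ a, q s a with hw
    have hwT : ∀ s, w s = ⨆ a, ∑ s', τ s a s' * (r s a s' + γ * w s') := by
      intro s
      simp only [hw]
      exact iSup_congr fun a => hq s a
    have hwv : w = vStar :=
      huniq w vStar (fun s => by rw [hwT s, hsup_eq]) hfix
    funext s a
    rw [hq s a, heq s a]
    refine Finset.sum_congr rfl fun s' _ => ?_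
    have hws : (⨆ a', q s' a') = vStar s' := by rw [← hwv]
    rw [hws]
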